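/- For fixed nonnegative integers a_1, ..., a_r, the function n ↦ ∑_{0 ≤ k_1 < k_2 < ... < k_r < n} k_1^{a_1} * k_2^{a_2} * ... * k_r^{a_r} is a polynomial in n of degree a_1 + ... + a_r + r, with leading coefficient 1 / ((a_1+1)(a_1+a_2+2)...(a_1+...+a_r+r)). -/

import Mathlib

open scoped BigOperators

/-- `∑_{0 ≤ k_1 < k_2 < ⋯ < k_r < n} k_1^{a_1} ⋯ k_r^{a_r}` (with `0^0 = 1`). -/
def sumPow (r : ℕ) (a : Fin r → ℕ) (n : ℕ) : ℚ :=
  ∑ k ∈ (Fintype.piFinset fun _ : Fin r => Finset.range n).filter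
      (fun k => ∀ i j : Fin r, i < j → k i < k j),
    ∏ i, (k i : ℚ) ^ a i

open Polynomial Finset in

lemma my_antideriv : ∀ (d : ℕ) (q : ℚ[X]), q.natDegree ≤ d →
    ∃ P : ℚ[X], P.eval 0 = 0 ∧ (∀ x : ℚ, P.eval (x+1) - P.eval x = q.eval x) ∧
      P.natDegree ≤ d + 1 ∧
      (q ≠ 0 → q.natDegree = d →
        P.natDegree = d + 1 ∧ P.leadingCoeff = q.leadingCoeff / ((d : ℚ) + 1)) := by
  intro d
  induction d with
  | zero =>
    intro q hq
    obtain ⟨c, rfl⟩ : ∃ c, q = C c := ⟨q.coeff 0, (Polynomial.eq_C_of_natDegree_le_zero hq)⟩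
    refine ⟨C c * X, by simp, fun x => by simp [mul_add], ?_, fun h0 _ => ?_⟩
    · exact (natDegree_mul_le).trans (by simp)
    · have hc : c ≠ 0 := fun h => h0 (by simp [h])
      constructor
      · simpa using natDegree_C_mul_X c hc
      · simp [leadingCoeff_mul, leadingCoeff_C]
  | succ d ih =>
    intro q hq
    rcases Nat.lt_or_ge q.natDegree (d+1) with hlt | hge
    · obtain ⟨P, h0, hΔ, hdeg, _⟩ := ih q (Nat.lt_succ_iff.mp hlt)
      exact ⟨P, h0, hΔ, hdeg.trans (by omega), fun _ hd => absurd hd (by omega)⟩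
    · have hdq : q.natDegree = d + 1 := le_antisymm hq hge
      have hq0 : q ≠ 0 := fun h => by simp [h] at hdq
      set c := q.leadingCoeff with hc
      have hc0 : c ≠ 0 := leadingCoeff_ne_zero.mpr hq0
      set m : ℕ := d + 2 with hm
      set E : ℚ[X] := (X + 1) ^ m - X ^ m with hE
      have hmonic1 : ((X + 1 : ℚ[X]) ^ m).Monic := by
        simpa using (monic_X_add_C (1:ℚ)).pow m
      have hmonic2 : ((X : ℚ[X]) ^ m).Monic := monic_X_pow m
      have hdeg1 : ((X + 1 : ℚ[X]) ^ m).degree = (m : ℕ) := by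
        rw [degree_pow, show ((X:ℚ[X])+1).degree = 1 by simpa using degree_X_add_C (1:ℚ)]
        simp [nsmul_eq_mul]
      have hEdeglt : E.degree < ((m : ℕ) : WithBot ℕ) := by
        have := degree_sub_lt (p := (X + 1 : ℚ[X])^m) (q := (X:ℚ[X])^m)
          (hdeg1.trans (degree_X_pow m).symm) hmonic1.ne_zero
          (by rw [hmonic1.leadingCoeff, hmonic2.leadingCoeff])
        rwa [hdeg1] at this
      have hEcoeff : E.coeff (d+1) = (m : ℚ) := by
        rw [hE, coeff_sub, coeff_X_add_one_pow, coeff_X_pow, if_neg (by omega)]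
        simp [hm, Nat.choose_succ_self_right]
        push_cast; ring
      have hEne : E ≠ 0 := fun h => by
        rw [h] at hEcoeff; simp [hm] at hEcoeff
        exact absurd hEcoeff (by positivity)
      have hEdeg : E.natDegree = d + 1 := by
        have h1 : E.natDegree < m := (natDegree_lt_iff_degree_lt hEne).mpr hEdeglt
        have h2 : d + 1 ≤ E.natDegree := le_natDegree_of_ne_zero (by rw [hEcoeff]; positivity)
        omega
      have hElead : E.leadingCoeff = (m : ℚ) := by
        rw [leadingCoeff, hEdeg, hEcoeff]
      have hmQ : (m : ℚ) ≠ 0 := by positivity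
      set D : ℚ[X] := C (c / m) * E with hD
      have hcm : c / (m:ℚ) ≠ 0 := div_ne_zero hc0 hmQ
      have hDdeg : D.natDegree = d + 1 := by
        rw [hD, natDegree_C_mul hcm, hEdeg]
      have hDlead : D.leadingCoeff = c := by
        rw [hD, leadingCoeff_mul, leadingCoeff_C, hElead]
        field_simp
      have hDne : D ≠ 0 := fun h => by rw [h] at hDlead; simp at hDlead; exact hc0 hDlead.symm
      set q1 : ℚ[X] := q - D with hq1
      have hq1deg : q1.natDegree ≤ d := by
        rcases eq_or_ne q1 0 with h | h
        · simp [h]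
        · have hdeq : q.degree = D.degree := by
            rw [degree_eq_natDegree hq0, degree_eq_natDegree hDne, hdq, hDdeg]
          have := degree_sub_lt hdeq hq0 (by rw [hDlead])
          rw [degree_eq_natDegree hq0, hdq] at this
          have h2 := (natDegree_lt_iff_degree_lt h).mpr this
          omega
      obtain ⟨P1, h10, h1Δ, h1deg, _⟩ := ih q1 hq1deg
      set P : ℚ[X] := C (c / m) * X ^ m + P1 with hP
      have hP0deg : (C (c / (m:ℚ)) * X ^ m).natDegree = m := by
        rw [natDegree_C_mul hcm, natDegree_X_pow]
      have hP0ne : (C (c / (m:ℚ)) * X ^ m) ≠ 0 := by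
        intro h
        have := congrArg (fun p => Polynomial.coeff p m) h
        simp at this
        exact hc0 this
      have hdlt : P1.degree < (C (c / (m:ℚ)) * X ^ m).degree := by
        apply degree_lt_degree
        rw [hP0deg]
        omega
      refine ⟨P, ?_, ?_, ?_, fun _ _ => ⟨?_, ?_⟩⟩
      · simp [hP, h10, hm]
      · intro x
        have h1 := h1Δ x
        have hq1x : q1.eval x = q.eval x - D.eval x := by simp [hq1]
        have hDx : D.eval x = c / m * ((x+1)^m - x^m) := by simp [hD, hE]
        simp only [hP, eval_add, eval_mul, eval_pow, eval_C, eval_X] at *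
        linarith
      · rw [hP, natDegree_add_eq_left_of_degree_lt hdlt, hP0deg]
      · rw [hP, natDegree_add_eq_left_of_degree_lt hdlt, hP0deg]
      · rw [hP, leadingCoeff_add_of_degree_lt' hdlt, leadingCoeff_mul, leadingCoeff_C,
          leadingCoeff_X_pow, hm]
        push_cast
        ring

open Polynomial Finset in
lemma my_sumPow_zero (a : Fin 0 → ℕ) (n : ℕ) : sumPow 0 a n = 1 := by
  simp [sumPow]

lemma my_sumPow_succ (r : ℕ) (a : Fin (r+1) → ℕ) (n : ℕ) :
    sumPow (r+1) a n
      = ∑ m ∈ Finset.range n, (m:ℚ)^(a (Fin.last r)) * sumPow r (a ∘ Fin.castSucc) m := by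
  unfold sumPow
  simp_rw [Finset.mul_sum]
  rw [Finset.sum_sigma']
  refine Finset.sum_nbij' (fun k => ⟨k (Fin.last r), Fin.init k⟩)
    (fun x => Fin.snoc x.2 x.1) ?_ ?_ ?_ ?_ ?_
  · rintro k hk
    simp only [Finset.mem_filter, Fintype.mem_piFinset, Finset.mem_range] at hk
    obtain ⟨h1, h2⟩ := hk
    refine Finset.mem_sigma.mpr ⟨Finset.mem_range.mpr (h1 _), ?_⟩
    simp only [Finset.mem_filter, Fintype.mem_piFinset, Finset.mem_range]
    exact ⟨fun i => h2 _ _ (Fin.castSucc_lt_last i),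
      fun i j hij => h2 _ _ (by exact_mod_cast Fin.castSucc_lt_castSucc_iff.mpr hij)⟩
  · rintro ⟨m, k'⟩ hx
    simp only [Finset.mem_sigma, Finset.mem_filter, Fintype.mem_piFinset, Finset.mem_range] at hx
    obtain ⟨hm, h1, h2⟩ := hx
    simp only [Finset.mem_filter, Fintype.mem_piFinset, Finset.mem_range]
    constructor
    · intro i
      induction i using Fin.lastCases with
      | last => simpa using hm
      | cast i => simpa using (h1 i).trans hm
    · intro i j hij
      induction j using Fin.lastCases with
      | last =>
        induction i using Fin.lastCases with
        | last => exact absurd hij (lt_irrefl _)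
        | cast i => simpa using h1 i
      | cast j =>
        induction i using Fin.lastCases with
        | last => exact absurd hij (by simp [Fin.lt_iff_val_lt_val])
        | cast i =>
          simp only [Fin.snoc_castSucc]
          exact h2 i j (Fin.castSucc_lt_castSucc_iff.mp hij)
  · intro k _
    exact Fin.snoc_init_self k
  · rintro ⟨m, k'⟩ _
    simp [Fin.init_snoc]
  · intro k _
    rw [Fin.prod_univ_castSucc]
    simp only [Fin.init, Function.comp]
    ring

open Polynomial Finset in
lemma my_telescope (P q : ℚ[X]) (h0 : P.eval 0 = 0)
    (hΔ : ∀ x : ℚ, P.eval (x+1) - P.eval x = q.eval x) (n : ℕ) :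
    P.eval (n : ℚ) = ∑ m ∈ Finset.range n, q.eval (m : ℚ) := by
  induction n with
  | zero => simpa using h0
  | succ n ihn =>
    rw [Finset.sum_range_succ, ← ihn]
    have := hΔ (n : ℚ)
    push_cast
    linarith


/-- The function `n ↦ ∑_{0 ≤ k_1 < ⋯ < k_r < n} k_1^{a_1}⋯k_r^{a_r}` is a polynomial in `n`
of degree `a_1+⋯+a_r+r` with leading coefficient
`1/((a_1+1)(a_1+a_2+2)⋯(a_1+⋯+a_r+r))`. -/
theorem stmt4 (r : ℕ) (a : Fin r → ℕ) :
    ∃ p : Polynomial ℚ,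
      (∀ n : ℕ, p.eval (n : ℚ) = sumPow r a n) ∧
      p.natDegree = (∑ i, a i) + r ∧
      p.leadingCoeff =
        1 / ∏ i : Fin r, ((∑ j ∈ Finset.univ.filter (· ≤ i), (a j : ℚ)) + (i : ℚ) + 1) := by
  open Polynomial Finset in
  induction r with
  | zero => exact ⟨1, fun n => by simp [my_sumPow_zero], by simp, by simp⟩
  | succ r ih =>
    obtain ⟨p, hp, hpdeg, hplead⟩ := ih (a ∘ Fin.castSucc)
    have hprodpos : 0 < ∏ i : Fin r,
        ((∑ j ∈ Finset.univ.filter (· ≤ i), ((a ∘ Fin.castSucc) j : ℚ)) + (i : ℚ) + 1) := by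
      apply Finset.prod_pos
      intro i _
      have h1 : (0:ℚ) ≤ ∑ j ∈ Finset.univ.filter (· ≤ i), ((a ∘ Fin.castSucc) j : ℚ) :=
        Finset.sum_nonneg fun j _ => by positivity
      have h2 : (0:ℚ) ≤ (i:ℚ) := by positivity
      linarith
    have hplead_ne : p.leadingCoeff ≠ 0 := by
      rw [hplead]; positivity
    have hp0 : p ≠ 0 := leadingCoeff_ne_zero.mp hplead_ne
    set e := a (Fin.last r) with he
    set q : ℚ[X] := X ^ e * p with hqdef
    have hq0 : q ≠ 0 := mul_ne_zero (pow_ne_zero _ X_ne_zero) hp0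
    have hqdeg : q.natDegree = e + p.natDegree := by
      rw [hqdef, natDegree_mul (pow_ne_zero _ X_ne_zero) hp0, natDegree_X_pow]
    have hqlead : q.leadingCoeff = p.leadingCoeff := by
      rw [hqdef, leadingCoeff_mul, leadingCoeff_X_pow, one_mul]
    obtain ⟨P, hP0, hPΔ, _, hPd⟩ := my_antideriv q.natDegree q le_rfl
    obtain ⟨hPdeg, hPlead⟩ := hPd hq0 rfl
    -- factor identities
    have hfc : ∀ i : Fin r,
        ((∑ j ∈ Finset.univ.filter (· ≤ Fin.castSucc i), (a j : ℚ)) + ((Fin.castSucc i : Fin (r+1)) : ℚ) + 1)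
          = ((∑ j ∈ Finset.univ.filter (· ≤ i), ((a ∘ Fin.castSucc) j : ℚ)) + (i : ℚ) + 1) := by
      intro i
      have hs : (∑ j ∈ Finset.univ.filter (· ≤ Fin.castSucc i), (a j : ℚ))
          = ∑ j ∈ Finset.univ.filter (· ≤ i), ((a ∘ Fin.castSucc) j : ℚ) := by
        rw [Finset.sum_filter, Finset.sum_filter, Fin.sum_univ_castSucc,
          if_neg ((Fin.castSucc_lt_last i).not_ge)]
        simp only [Fin.castSucc_le_castSucc_iff, Function.comp, add_zero]
      rw [hs]
      simp
    have hfl : ((∑ j ∈ Finset.univ.filter (· ≤ Fin.last r), (a j : ℚ)) + ((Fin.last r : Fin (r+1)) : ℚ) + 1)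
        = (∑ j : Fin (r+1), (a j : ℚ)) + (r : ℚ) + 1 := by
      rw [Finset.filter_true_of_mem (fun j _ => Fin.le_last j)]
      simp
    refine ⟨P, ?_, ?_, ?_⟩
    · intro n
      rw [my_telescope P q hP0 hPΔ n, my_sumPow_succ]
      refine Finset.sum_congr rfl fun m _ => ?_
      rw [hqdef]
      simp [hp m, he]
    · rw [hPdeg, hqdeg, hpdeg, Fin.sum_univ_castSucc]
      simp only [Function.comp]
      omega
    · rw [hPlead, hqlead, hplead, Fin.prod_univ_castSucc]
      rw [Finset.prod_congr rfl (fun i _ => hfc i), hfl]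
      rw [div_div]
      congr 1
      congr 1
      rw [hqdeg, hpdeg]
      push_cast
      rw [Fin.sum_univ_castSucc]
      simp only [Function.comp]
      push_cast
      ring
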